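/- arXiv:1204.1228 — 3 statements merged into one kernel-verified Lean document; each statement's English description precedes it below -/
import Mathlib

section
/- Let f : ℂⁿ → ℂᵐ be given by polynomials f₁, …, fₘ with rational coefficients. Suppose p ∈ ℂⁿ is a generic point (its coordinates are algebraically independent over ℚ) and the Jacobian matrix df|ₚ has rank m. Then f(p) is a generic point in ℂᵐ, i.e., the coordinates of f(p) are algebraically independent over ℚ. -/
open MvPolynomial

/-- The Jacobian matrix at `p ∈ ℂⁿ` of the polynomial map `ℂⁿ → ℂᵐ` given by
rational polynomials `F 0, …, F (m−1)`. -/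
noncomputable def jacobianAt {n m : ℕ} (F : Fin m → MvPolynomial (Fin n) ℚ)
    (p : Fin n → ℂ) : Matrix (Fin m) (Fin n) ℂ :=
  Matrix.of fun i j => aeval p (pderiv j (F i))

section aux

variable {n m : ℕ}

lemma sub_single_add_single {d : Fin m →₀ ℕ} {i : Fin m} (h : d i ≠ 0) :
    (d - Finsupp.single i 1) + Finsupp.single i 1 = d := by
  ext j
  by_cases hj : j = i
  · subst hj
    simp only [Finsupp.add_apply, Finsupp.tsub_apply, Finsupp.single_eq_same]
    omega
  · simp [Finsupp.add_apply, Finsupp.tsub_apply, Finsupp.single_eq_of_ne hj]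

/-- coefficient formula for pderiv -/
lemma coeff_pderiv_aux (i : Fin m) (d : Fin m →₀ ℕ) (Q : MvPolynomial (Fin m) ℚ) :
    coeff d (pderiv i Q) = (d i + 1 : ℚ) * coeff (d + Finsupp.single i 1) Q := by
  induction Q using MvPolynomial.induction_on' with
  | monomial s a =>
    rw [pderiv_monomial, coeff_monomial, coeff_monomial]
    by_cases hs : s i = 0
    · simp only [hs, Nat.cast_zero, mul_zero]
      have hne : s ≠ d + Finsupp.single i 1 := by
        intro h
        have := DFunLike.congr_fun h i
        simp [hs] at this
      simp [hne]
    · by_cases h : s = d + Finsupp.single i 1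
      · have hd : s - Finsupp.single i 1 = d := by
          have h2 := sub_single_add_single (d := s) (i := i) hs
          exact add_right_cancel (h2.trans h)
        have hdi : s i = d i + 1 := by
          have := DFunLike.congr_fun h i
          simpa using this
        rw [if_pos hd, if_pos h, hdi]
        push_cast
        ring
      · have hd : s - Finsupp.single i 1 ≠ d := by
          intro hdd
          apply h
          rw [← hdd, sub_single_add_single hs]
        simp [hd, h]
  | add p q hp hq =>
    simp [hp, hq, mul_add]



lemma totalDegree_pderiv_lt {Q : MvPolynomial (Fin m) ℚ} (hQ : Q.totalDegree ≠ 0)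
    (i : Fin m) : (pderiv i Q).totalDegree < Q.totalDegree := by
  rw [totalDegree, Finset.sup_lt_iff (Nat.pos_of_ne_zero hQ)]
  intro d hd
  have h1 : coeff d (pderiv i Q) ≠ 0 := mem_support_iff.mp hd
  rw [coeff_pderiv_aux] at h1
  have h2 : coeff (d + Finsupp.single i 1) Q ≠ 0 := by
    intro h; rw [h, mul_zero] at h1; exact h1 rfl
  have h3 := le_totalDegree (mem_support_iff.mpr h2)
  have h4 : ((d + Finsupp.single i 1).sum fun _ e => e)
      = (d.sum fun _ e => e) + 1 := by
    rw [Finsupp.sum_add_index' (fun _ => rfl) (fun _ _ _ => rfl), Finsupp.sum_single_index rfl]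
  omega

lemma exists_pderiv_ne_zero {Q : MvPolynomial (Fin m) ℚ} (hQ : Q.totalDegree ≠ 0) :
    ∃ i, pderiv i Q ≠ 0 := by
  have hQ0 : Q ≠ 0 := by rintro rfl; simp at hQ
  obtain ⟨d, hd, hsum⟩ := Finset.exists_mem_eq_sup Q.support
    (support_nonempty.mpr hQ0) fun s => s.sum fun _ e => e
  rw [totalDegree] at hQ
  rw [hsum] at hQ
  have : ∃ i, d i ≠ 0 := by
    by_contra hall
    push_neg at hall
    exact hQ (by simp [Finsupp.sum, hall])
  obtain ⟨i, hi⟩ := this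
  refine ⟨i, fun h => ?_⟩
  have hc : coeff (d - Finsupp.single i 1) (pderiv i Q) = 0 := by rw [h]; simp
  set e := d - Finsupp.single i 1 with he
  rw [coeff_pderiv_aux] at hc
  rw [show e + Finsupp.single i 1 = d from sub_single_add_single hi] at hc
  rcases mul_eq_zero.mp hc with h' | h'
  · exact Nat.cast_add_one_ne_zero (e i) h'
  · exact mem_support_iff.mp hd h'

lemma chain_rule (F : Fin m → MvPolynomial (Fin n) ℚ) (Q : MvPolynomial (Fin m) ℚ)
    (j : Fin n) :
    pderiv j (aeval F Q) = ∑ i, aeval F (pderiv i Q) * pderiv j (F i) := by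
  induction Q using MvPolynomial.induction_on with
  | C a => simp
  | add p q hp hq => simp only [map_add, hp, hq, add_mul, Finset.sum_add_distrib]
  | mul_X p k hp =>
    have key : ∀ i : Fin m, aeval F (pderiv i (p * X k)) * pderiv j (F i)
        = aeval F (pderiv i p) * pderiv j (F i) * F k
          + (if i = k then aeval F p * pderiv j (F k) else 0) := by
      intro i
      rcases eq_or_ne i k with rfl | h
      · simp only [pderiv_mul, pderiv_X_self, mul_one, map_add, map_mul, aeval_X, eq_self_iff_true, if_true]
        ring
      · simp only [pderiv_mul, pderiv_X_of_ne (Ne.symm h), mul_zero, add_zero, map_mul,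
          aeval_X, if_neg h]
        ring
    rw [map_mul, aeval_X, pderiv_mul, hp, Finset.sum_congr rfl (fun i _ => key i),
      Finset.sum_add_distrib, Finset.sum_ite_eq' Finset.univ k, Finset.sum_mul]
    simp

lemma vecMul_eq_zero_of_rank {m' n' : ℕ} (J : Matrix (Fin m') (Fin n') ℂ)
    (hrank : J.rank = m') (v : Fin m' → ℂ) (hv : Matrix.vecMul v J = 0) : v = 0 := by
  have ht : J.transpose.rank = m' := by rw [Matrix.rank_transpose, hrank]
  have hker : LinearMap.ker J.transpose.mulVecLin = ⊥ := by
    have h1 := LinearMap.finrank_range_add_finrank_ker J.transpose.mulVecLin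
    rw [Module.finrank_pi] at h1
    have h2 : Module.finrank ℂ (LinearMap.range J.transpose.mulVecLin) = m' := ht
    have h3 : Module.finrank ℂ (LinearMap.ker J.transpose.mulVecLin) = 0 := by
      rw [h2, Fintype.card_fin] at h1; omega
    exact Submodule.finrank_eq_zero.mp h3
  have : J.transpose.mulVec v = 0 := by rw [Matrix.mulVec_transpose, hv]
  have hm : v ∈ LinearMap.ker J.transpose.mulVecLin := this
  rw [hker] at hm
  exact hm


lemma eq_C_of_totalDegree_eq_zero {Q : MvPolynomial (Fin m) ℚ} (h : Q.totalDegree = 0) :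
    Q = C (coeff 0 Q) := by
  ext d
  rcases eq_or_ne d 0 with rfl | hd
  · simp
  · rw [coeff_C, if_neg (Ne.symm hd)]
    by_contra hc
    apply hd
    ext j
    exact (totalDegree_eq_zero_iff _ Q).mp h d (mem_support_iff.mpr hc) j

end aux

/-- If `p ∈ ℂⁿ` is generic (its coordinates are algebraically independent over `ℚ`)
and the Jacobian of the rational polynomial map `f : ℂⁿ → ℂᵐ` at `p` has rank `m`,
then `f(p)` is a generic point of `ℂᵐ`. -/
theorem image_of_generic_is_generic {n m : ℕ} (F : Fin m → MvPolynomial (Fin n) ℚ)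
    (p : Fin n → ℂ) (hp : AlgebraicIndependent ℚ p)
    (hrank : (jacobianAt F p).rank = m) :
    AlgebraicIndependent ℚ (fun i => aeval p (F i)) := by
  have hinj : Function.Injective (aeval p : MvPolynomial (Fin n) ℚ →ₐ[ℚ] ℂ) :=
    algebraicIndependent_iff_injective_aeval.mp hp
  have hcomp : ∀ Q : MvPolynomial (Fin m) ℚ,
      aeval (fun i => aeval p (F i)) Q = aeval p (aeval F Q) := by
    intro Q
    rw [← comp_aeval]
    rfl
  rw [algebraicIndependent_iff]
  suffices H : ∀ N, ∀ Q : MvPolynomial (Fin m) ℚ, Q.totalDegree ≤ N →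
      aeval (fun i => aeval p (F i)) Q = 0 → Q = 0 by
    exact fun Q hQ => H Q.totalDegree Q le_rfl hQ
  intro N
  induction N with
  | zero =>
    intro Q hdeg hQ
    rw [eq_C_of_totalDegree_eq_zero (Nat.le_zero.mp hdeg)] at hQ ⊢
    rw [aeval_C] at hQ
    have : coeff 0 Q = 0 := (algebraMap ℚ ℂ).injective (by simpa using hQ)
    rw [this, map_zero]
  | succ N ih =>
    intro Q hdeg hQ
    by_cases h0 : Q.totalDegree = 0
    · rw [eq_C_of_totalDegree_eq_zero h0] at hQ ⊢
      rw [aeval_C] at hQ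
      have : coeff 0 Q = 0 := (algebraMap ℚ ℂ).injective (by simpa using hQ)
      rw [this, map_zero]
    · -- `aeval F Q = 0` by injectivity of `aeval p`
      have hG : aeval F Q = 0 := by
        apply hinj
        rw [map_zero, ← hcomp, hQ]
      -- each partial derivative also vanishes at the image point
      set v : Fin m → ℂ := fun i => aeval (fun i' => aeval p (F i')) (pderiv i Q) with hv
      have hvec : Matrix.vecMul v (jacobianAt F p) = 0 := by
        funext j
        have h1 : aeval p (pderiv j (aeval F Q)) = 0 := by rw [hG, map_zero, map_zero]
        rw [chain_rule F Q j] at h1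
        simp only [map_sum, map_mul] at h1
        simpa [Matrix.vecMul, dotProduct, hv, hcomp, jacobianAt, mul_comm] using h1
      have hv0 : v = 0 := vecMul_eq_zero_of_rank _ hrank v hvec
      have hz : ∀ i, pderiv i Q = 0 := by
        intro i
        apply ih (pderiv i Q)
        · have := totalDegree_pderiv_lt h0 i
          omega
        · have : v i = 0 := by rw [hv0]; rfl
          simpa [hv] using this
      obtain ⟨i, hi⟩ := exists_pderiv_ne_zero h0
      exact absurd (hz i) hi
end

section
/- Let (G, p) be a quasi-generic complex realisation of a graph G = (V, E) (i.e., congruent to a realisation whose coordinates are algebraically independent over ℚ). If the rows of the rigidity matrix R(G, p) are linearly independent, then the point d_G(p) ∈ ℂ^|E| of squared edge lengths is generic, i.e., its coordinates are algebraically independent over ℚ. -/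
/-- The complex quadratic form `d(x, y) = x² + y²` on `ℂ²`. -/
noncomputable def cd (P : Fin 2 → ℂ) : ℂ := (P 0) ^ 2 + (P 1) ^ 2

/-- The rigidity matrix of a realisation `p : V → K²` of a graph with edge list
`e : Fin m → V × V`: the row of edge `i` has the coordinates of
`p(u) − p(v)` in the columns of `u`, of `p(v) − p(u)` in the columns of `v`
(where `e i = (u, v)`), and zeros elsewhere. -/
def rigidityMatrix {V : Type*} [DecidableEq V] {K : Type*} [Field K] {m : ℕ}
    (e : Fin m → V × V) (p : V → Fin 2 → K) : Matrix (Fin m) (V × Fin 2) K :=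
  Matrix.of fun i x =>
    if x.1 = (e i).1 then p (e i).1 x.2 - p (e i).2 x.2
    else if x.1 = (e i).2 then p (e i).2 x.2 - p (e i).1 x.2
    else 0

/-- The rigidity map: the vector of squared complex edge lengths. -/
noncomputable def edgeLengths {V : Type*} {m : ℕ} (e : Fin m → V × V)
    (p : V → Fin 2 → ℂ) : Fin m → ℂ :=
  fun i => cd (p (e i).1 - p (e i).2)

/-- `p` is quasi-generic if it is congruent to a realisation whose coordinates are
algebraically independent over `ℚ`. -/
def IsQuasiGeneric {V : Type*} (p : V → Fin 2 → ℂ) : Prop :=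
  ∃ q : V → Fin 2 → ℂ, (∀ u v : V, cd (p u - p v) = cd (q u - q v)) ∧
    AlgebraicIndependent ℚ (fun x : V × Fin 2 => q x.1 x.2)

/-! ### Auxiliary lemmas about multivariate polynomials -/

open MvPolynomial

section PolyAux

set_option linter.unusedSectionVars false

lemma my_eq_C_of_totalDegree_eq_zero {σ : Type*} {P : MvPolynomial σ ℚ}
    (h : P.totalDegree = 0) : P = C (P.coeff 0) := by
  classical
  ext d
  rcases eq_or_ne d 0 with rfl | hd
  · simp
  · rw [coeff_C, if_neg (Ne.symm hd)]
    by_contra hc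
    exact hd (Finsupp.ext fun x => (totalDegree_eq_zero_iff σ P).mp h d (mem_support_iff.mpr hc) x)

lemma my_coeff_pderiv {σ : Type*} [DecidableEq σ] (i : σ) (P : MvPolynomial σ ℚ) (d : σ →₀ ℕ) :
    coeff d (pderiv i P) = (d i + 1) * coeff (d + Finsupp.single i 1) P := by
  induction P using MvPolynomial.induction_on' with
  | add p q hp hq => simp [hp, hq, mul_add]
  | monomial s a =>
    rw [pderiv_monomial, coeff_monomial, coeff_monomial]
    by_cases h : s - Finsupp.single i 1 = d
    · rw [if_pos h]
      by_cases hsi : s i = 0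
      · rw [if_neg, mul_zero]
        · simp [hsi]
        · intro he
          have := DFunLike.congr_fun he i
          simp [hsi] at this
      · rw [if_pos]
        · have hs : s = d + Finsupp.single i 1 := by
            rw [← h]
            ext x
            rcases eq_or_ne x i with rfl | hx
            · simp [Nat.sub_add_cancel (Nat.one_le_iff_ne_zero.mpr hsi)]
            · simp [Finsupp.single_apply, Ne.symm hx]
          have : s i = d i + 1 := by simp [hs, Finsupp.single_apply]
          rw [this]
          push_cast
          ring
        · ext x
          rcases eq_or_ne x i with rfl | hx
          · simp [← h, Nat.sub_add_cancel (Nat.one_le_iff_ne_zero.mpr hsi)]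
          · simp [Finsupp.single_apply, Ne.symm hx, ← h]
    · rw [if_neg h, if_neg, mul_zero]
      intro he
      apply h
      rw [he]
      ext x
      rcases eq_or_ne x i with rfl | hx
      · simp
      · simp [Finsupp.single_apply, Ne.symm hx]

lemma my_totalDegree_zero_of_pderiv {σ : Type*} [DecidableEq σ] {P : MvPolynomial σ ℚ}
    (h : ∀ i, pderiv i P = 0) : P.totalDegree = 0 := by
  rw [totalDegree_eq_zero_iff]
  intro d hd x
  by_contra hx
  obtain ⟨n, hn⟩ : ∃ n, d x = n + 1 :=
    ⟨d x - 1, (Nat.succ_pred_eq_of_pos (Nat.pos_of_ne_zero hx)).symm⟩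
  have hco : coeff (d - Finsupp.single x 1) (pderiv x P) = 0 := by rw [h x]; simp
  rw [my_coeff_pderiv] at hco
  have hdd : (d - Finsupp.single x 1) + Finsupp.single x 1 = d := by
    ext y
    rcases eq_or_ne y x with rfl | hy
    · simp [hn]
    · simp [Finsupp.single_apply, Ne.symm hy]
  rw [hdd] at hco
  rcases mul_eq_zero.mp hco with h1 | h2
  · exact Nat.cast_add_one_ne_zero _ h1
  · exact mem_support_iff.mp hd h2

lemma my_totalDegree_pderiv_le {σ : Type*} [DecidableEq σ] (i : σ) (P : MvPolynomial σ ℚ)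
    {n : ℕ} (h : P.totalDegree ≤ n + 1) : (pderiv i P).totalDegree ≤ n := by
  apply Finset.sup_le
  intro d hd
  have hc : coeff d (pderiv i P) ≠ 0 := mem_support_iff.mp hd
  rw [my_coeff_pderiv] at hc
  have hc2 : coeff (d + Finsupp.single i 1) P ≠ 0 := fun h0 => hc (by rw [h0, mul_zero])
  have := le_totalDegree (mem_support_iff.mpr hc2)
  have hsum : (d + Finsupp.single i 1).sum (fun _ e => e) = d.sum (fun _ e => e) + 1 := by
    rw [Finsupp.sum_add_index (by simp) (by simp)]
    simp
  omega

lemma my_chain_rule {m : ℕ} {σ : Type*} [DecidableEq σ] (f : Fin m → MvPolynomial σ ℚ)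
    (P : MvPolynomial (Fin m) ℚ) (j : σ) :
    pderiv j (bind₁ f P) = ∑ i, bind₁ f (pderiv i P) * pderiv j (f i) := by
  induction P using MvPolynomial.induction_on with
  | C a => simp [bind₁_C_right]
  | add p q hp hq =>
    simp only [map_add, hp, hq, ← Finset.sum_add_distrib, add_mul]
  | mul_X p i hp =>
    have hX : ∀ k : Fin m, (pderiv k) (X i : MvPolynomial (Fin m) ℚ) = if i = k then 1 else 0 := by
      intro k
      rcases eq_or_ne i k with rfl | h
      · simp [pderiv_X_self]
      · simp [pderiv_X_of_ne h.symm, h]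
    have hterm : ∀ k : Fin m, bind₁ f (pderiv k (p * X i)) * pderiv j (f k) =
        bind₁ f (pderiv k p) * pderiv j (f k) * f i +
          (if i = k then bind₁ f p * pderiv j (f k) else 0) := by
      intro k
      rw [pderiv_mul, hX k, map_add, map_mul, map_mul, bind₁_X_right]
      split <;> simp only [map_one, map_zero, mul_one, mul_zero, add_zero] <;> ring
    rw [map_mul, bind₁_X_right, pderiv_mul, hp,
      Finset.sum_congr rfl (fun k _ => hterm k), Finset.sum_add_distrib,
      Finset.sum_ite_eq Finset.univ i (fun k => bind₁ f p * pderiv j (f k)),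
      if_pos (Finset.mem_univ i), Finset.sum_mul]

end PolyAux

/-! ### A matrix with independent rows has an invertible square submatrix -/

open Matrix in
lemma exists_good_minor {m : ℕ} {α : Type*} [Fintype α] (M : Matrix (Fin m) α ℂ)
    (h : LinearIndependent ℂ (fun i => M i)) :
    ∃ g : Fin m → α, IsUnit (M.submatrix id g) := by
  classical
  have hrank : M.rank = m := by simpa using h.rank_matrix
  have hTrank : Mᵀ.rank = m := by rw [rank_transpose, hrank]
  have hspan : Submodule.span ℂ (Set.range Mᵀ.row) = ⊤ := by
    apply Submodule.eq_top_of_finrank_eq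
    rw [← rank_eq_finrank_span_row Mᵀ, hTrank]
    simp [Module.finrank_pi]
  obtain ⟨b, hb_sub, hb_span, hb_li⟩ := exists_linearIndependent ℂ (Set.range Mᵀ.row)
  rw [hspan] at hb_span
  let B : Module.Basis b ℂ (Fin m → ℂ) := Module.Basis.mk hb_li (by rw [Subtype.range_coe]; exact hb_span.ge)
  let eqv : Fin m ≃ b := (B.indexEquiv (Pi.basisFun ℂ (Fin m))).symm
  choose g hg using fun k : Fin m => hb_sub (eqv k).2
  refine ⟨g, ?_⟩
  rw [← linearIndependent_cols_iff_isUnit]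
  have : (M.submatrix id g).col = fun k => ((eqv k : Fin m → ℂ)) := by
    funext k
    ext i
    simpa [Matrix.submatrix, Matrix.transpose] using congr_fun (hg k) i
  rw [this]
  exact hb_li.comp eqv eqv.injective

/-! ### Edge-length polynomials and the polynomial rigidity matrix -/

section Rig

set_option linter.unusedSectionVars false

variable {V : Type*} [DecidableEq V] {m : ℕ}

/-- Edge length polynomials. -/
noncomputable def fpoly (e : Fin m → V × V) : Fin m → MvPolynomial (V × Fin 2) ℚ :=
  fun i => (X ((e i).1, 0) - X ((e i).2, 0)) ^ 2 + (X ((e i).1, 1) - X ((e i).2, 1)) ^ 2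

/-- Polynomial rigidity matrix. -/
noncomputable def Mpoly (e : Fin m → V × V) :
    Matrix (Fin m) (V × Fin 2) (MvPolynomial (V × Fin 2) ℚ) :=
  Matrix.of fun i x =>
    if x.1 = (e i).1 then X ((e i).1, x.2) - X ((e i).2, x.2)
    else if x.1 = (e i).2 then X ((e i).2, x.2) - X ((e i).1, x.2)
    else 0

lemma aeval_fpoly (e : Fin m → V × V) (r : V → Fin 2 → ℂ) (i : Fin m) :
    aeval (fun x : V × Fin 2 => r x.1 x.2) (fpoly e i) = edgeLengths e r i := by
  simp [fpoly, cd, edgeLengths]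

lemma pderiv_fpoly (e : Fin m → V × V) (hloop : ∀ i, (e i).1 ≠ (e i).2)
    (i : Fin m) (x : V × Fin 2) :
    pderiv x (fpoly e i) = 2 * Mpoly e i x := by
  obtain ⟨w, k⟩ := x
  have h12 := hloop i
  simp only [fpoly, Mpoly, Matrix.of_apply, map_add, pderiv_pow, map_sub, pderiv_X]
  by_cases hw1 : w = (e i).1 <;> by_cases hw2 : w = (e i).2 <;>
    fin_cases k <;>
    simp_all [Pi.single_apply, Prod.ext_iff] <;> ring

lemma aeval_Mpoly (e : Fin m → V × V) (r : V → Fin 2 → ℂ) (i : Fin m) (x : V × Fin 2) :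
    aeval (fun y : V × Fin 2 => r y.1 y.2) (Mpoly e i x) = rigidityMatrix e r i x := by
  obtain ⟨w, k⟩ := x
  simp only [Mpoly, rigidityMatrix, Matrix.of_apply]
  split
  · simp
  · split <;> simp

end Rig

/-- If `(G, p)` is a quasi-generic complex realisation of a graph `G` and the rows of
the rigidity matrix `R(G, p)` are linearly independent, then the vector of squared edge
lengths `d_G(p)` is generic (its coordinates are algebraically independent over `ℚ`). -/
theorem edgeLengths_generic_of_quasiGeneric {V : Type*} [Fintype V] [DecidableEq V]
    {m : ℕ} (e : Fin m → V × V) (hloop : ∀ i, (e i).1 ≠ (e i).2)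
    (p : V → Fin 2 → ℂ) (hqg : IsQuasiGeneric p)
    (hrows : LinearIndependent ℂ (fun i => rigidityMatrix e p i)) :
    AlgebraicIndependent ℚ (edgeLengths e p) := by
  classical
  obtain ⟨q, hcong, hq⟩ := hqg
  have hqinj : Function.Injective (aeval (fun x : V × Fin 2 => q x.1 x.2) :
      MvPolynomial (V × Fin 2) ℚ →ₐ[ℚ] ℂ) := algebraicIndependent_iff_injective_aeval.mp hq
  set q' : V × Fin 2 → ℂ := fun x => q x.1 x.2 with hq'def
  set p' : V × Fin 2 → ℂ := fun x => p x.1 x.2 with hp'def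
  have hEL : edgeLengths e p = edgeLengths e q := funext fun i => hcong _ _
  -- an invertible minor of the rigidity matrix at `p`
  obtain ⟨g, hg⟩ := exists_good_minor (rigidityMatrix e p) hrows
  set D : MvPolynomial (V × Fin 2) ℚ := ((Mpoly e).submatrix id g).det with hDdef
  have hmap : ∀ r : V → Fin 2 → ℂ,
      (aeval (fun y : V × Fin 2 => r y.1 y.2) : MvPolynomial (V × Fin 2) ℚ →ₐ[ℚ] ℂ) D
        = ((rigidityMatrix e r).submatrix id g).det := by
    intro r
    rw [hDdef, AlgHom.map_det]
    congr 1
    ext i k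
    exact aeval_Mpoly e r i (g k)
  have hDne : D ≠ 0 := by
    intro h0
    have := hmap p
    rw [h0, map_zero] at this
    exact ((Matrix.isUnit_iff_isUnit_det _).mp hg).ne_zero this.symm
  have hDq : (aeval q') D ≠ 0 := fun h0 => hDne (hqinj (by rw [h0, map_zero]))
  have hQunit : IsUnit ((rigidityMatrix e q).submatrix id g) := by
    rw [Matrix.isUnit_iff_isUnit_det, isUnit_iff_ne_zero, ← hmap q]
    exact hDq
  -- the main argument
  rw [hEL, algebraicIndependent_iff_injective_aeval,
    injective_iff_map_eq_zero]
  suffices h : ∀ n (P : MvPolynomial (Fin m) ℚ), P.totalDegree ≤ n →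
      aeval (edgeLengths e q) P = 0 → P = 0 by
    intro P hP
    exact h P.totalDegree P le_rfl hP
  intro n
  induction n with
  | zero =>
    intro P hdeg hval
    rw [my_eq_C_of_totalDegree_eq_zero (Nat.le_zero.mp hdeg)] at hval ⊢
    rw [aeval_C] at hval
    rw [(map_eq_zero_iff _ (algebraMap ℚ ℂ).injective).mp hval, map_zero]
  | succ n ih =>
    intro P hdeg hval
    set F : MvPolynomial (V × Fin 2) ℚ := bind₁ (fpoly e) P with hFdef
    have hFq : aeval q' F = 0 := by
      rw [hFdef, aeval_bind₁]
      rw [show (fun i => aeval q' (fpoly e i)) = edgeLengths e q from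
        funext fun i => aeval_fpoly e q i]
      exact hval
    have hF0 : F = 0 := hqinj (by rw [hFq, map_zero])
    set c : Fin m → ℂ := fun i => aeval (edgeLengths e q) (pderiv i P) with hcdef
    have hker : ∀ x : V × Fin 2, ∑ i, c i * rigidityMatrix e q i x = 0 := by
      intro x
      have h1 : pderiv x F = 0 := by rw [hF0, map_zero]
      rw [hFdef, my_chain_rule] at h1
      have h2 := congrArg (aeval q') h1
      rw [map_zero, map_sum] at h2
      have h3 : ∀ i : Fin m,
          aeval q' (bind₁ (fpoly e) (pderiv i P) * pderiv x (fpoly e i))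
            = 2 * (c i * rigidityMatrix e q i x) := by
        intro i
        rw [map_mul, pderiv_fpoly e hloop, map_mul, aeval_Mpoly, aeval_bind₁]
        rw [show (fun j => aeval q' (fpoly e j)) = edgeLengths e q from
          funext fun j => aeval_fpoly e q j]
        have : (aeval q') (2 : MvPolynomial (V × Fin 2) ℚ) = 2 := by
          rw [show (2 : MvPolynomial (V × Fin 2) ℚ) = C 2 by rw [map_ofNat], aeval_C]
          norm_num
        rw [this]
        ring
      rw [Finset.sum_congr rfl (fun i _ => h3 i), ← Finset.mul_sum] at h2
      rcases mul_eq_zero.mp h2 with h4 | h4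
      · norm_num at h4
      · exact h4
    have hvm : Matrix.vecMul c ((rigidityMatrix e q).submatrix id g) = 0 := by
      funext k
      simpa [Matrix.vecMul, dotProduct] using hker (g k)
    have hc0 : c = 0 :=
      Matrix.vecMul_injective_iff_isUnit.mpr hQunit
        (show Matrix.vecMul c _ = Matrix.vecMul 0 _ by rw [hvm, Matrix.zero_vecMul])
    have hdz : ∀ i, pderiv i P = 0 := fun i =>
      ih _ (my_totalDegree_pderiv_le i P hdeg) (congr_fun hc0 i)
    rw [my_eq_C_of_totalDegree_eq_zero (my_totalDegree_zero_of_pderiv hdz)] at hval ⊢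
    rw [aeval_C] at hval
    rw [(map_eq_zero_iff _ (algebraMap ℚ ℂ).injective).mp hval, map_zero]
end

section
/- Let (G₁, G₂) be a 2-separation of a rigid graph G with V(G₁) ∩ V(G₂) = {v₁, v₂}, and suppose G₂ is not rigid. Let F be a spanning isostatic subgraph of G. Then |E(F) ∩ E(G₁)| = 2|V(G₁)| − 3 and |E(F) ∩ E(G₂)| = 2|V(G₂)| − 4; in particular G₁ is rigid. -/
/-- The rigidity-matrix row vector associated to a pair `u, v` in a real realisation. -/
def rigidityVec {W : Type*} [DecidableEq W] (p : W → Fin 2 → ℝ) (u v : W) :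
    W × Fin 2 → ℝ :=
  fun x => if x.1 = u then p u x.2 - p v x.2
    else if x.1 = v then p v x.2 - p u x.2 else 0

/-- A graph is rigid (in `ℝ²`) if the rows of the rigidity matrix of some (equivalently,
any generic) real realisation span a space of dimension `2|W| − 3`. -/
def GraphRigid {W : Type*} [DecidableEq W] (G : SimpleGraph W) : Prop :=
  ∃ p : W → Fin 2 → ℝ,
    Module.finrank ℝ (Submodule.span ℝ
      {w : W × Fin 2 → ℝ | ∃ u v : W, G.Adj u v ∧ w = rigidityVec p u v})
      = 2 * Nat.card W - 3

lemma rigidityVec_symm {W : Type*} [DecidableEq W] (p : W → Fin 2 → ℝ) (u v : W) :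
    rigidityVec p u v = rigidityVec p v u := by
  funext x
  unfold rigidityVec
  by_cases h1 : x.1 = u <;> by_cases h2 : x.1 = v
  · have : u = v := h1.symm.trans h2
    subst this; simp [h1]
  · have : ¬ u = v := fun h => h2 (h1.trans h)
    simp [h1, h2, this]
  · have : ¬ v = u := fun h => h1 (h2.trans h)
    simp [h1, h2, this]
  · simp [h1, h2]

lemma sum_support_pair {W : Type*} [Fintype W] [DecidableEq W] {u v : W} (h : u ≠ v)
    (f : W → ℝ) (hf : ∀ y, y ≠ u → y ≠ v → f y = 0) : ∑ y, f y = f u + f v := by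
  rw [← Finset.sum_pair h]
  refine (Finset.sum_subset (Finset.subset_univ _) ?_).symm
  intro y _ hy
  simp only [Finset.mem_insert, Finset.mem_singleton] at hy
  push_neg at hy
  exact hf y hy.1 hy.2

open Module Submodule in
lemma rank_rigidity_le {W : Type*} [Fintype W] [DecidableEq W] (p : W → Fin 2 → ℝ)
    (S : Set (W × Fin 2 → ℝ)) (hS : ∀ w ∈ S, ∃ u v : W, w = rigidityVec p u v) :
    Module.finrank ℝ (Submodule.span ℝ S) ≤ 2 * Fintype.card W - 3 := by
  classical
  by_cases hp : ∀ a b : W, p a = p b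
  · -- all rows are zero
    have hz : S ⊆ (⊥ : Submodule ℝ (W × Fin 2 → ℝ)) := by
      intro w hw
      obtain ⟨u, v, rfl⟩ := hS w hw
      have : rigidityVec p u v = 0 := by
        funext x; unfold rigidityVec; rw [hp u v]; split_ifs <;> simp
      simp [this]
    have h0 : Submodule.span ℝ S = ⊥ := le_bot_iff.1 (Submodule.span_le.2 hz)
    rw [h0, finrank_bot]
    exact Nat.zero_le _
  · push_neg at hp
    obtain ⟨a, b, hab⟩ := hp
    have hab' : a ≠ b := fun h => hab (h ▸ rfl)
    have hcoord : p a 0 ≠ p b 0 ∨ p a 1 ≠ p b 1 := by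
      by_contra h
      push_neg at h
      apply hab
      funext j
      fin_cases j
      · exact h.1
      · exact h.2
    set c : Fin 3 → (W × Fin 2 → ℝ) :=
      ![fun x => if x.2 = 0 then 1 else 0,
        fun x => if x.2 = 1 then 1 else 0,
        fun x => if x.2 = 0 then -(p x.1 1) else p x.1 0] with hc
    set Φ : (W × Fin 2 → ℝ) →ₗ[ℝ] (Fin 3 → ℝ) :=
      { toFun := fun w i => ∑ x, w x * c i x
        map_add' := by
          intro w₁ w₂; funext i
          simp [add_mul, Finset.sum_add_distrib]
        map_smul' := by
          intro r w; funext i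
          simp [Finset.mul_sum, mul_assoc] } with hΦ
    have hΦapp : ∀ w i, Φ w i = ∑ x, w x * c i x := fun w i => rfl
    have hsingle : ∀ (x₀ : W × Fin 2) (r : ℝ) (i), Φ (Pi.single x₀ r) i = r * c i x₀ := by
      intro x₀ r i
      rw [hΦapp, Finset.sum_eq_single x₀]
      · simp
      · intro x _ hx
        simp [Pi.single_eq_of_ne hx]
      · intro h; exact absurd (Finset.mem_univ _) h
    have hker : ∀ w ∈ S, Φ w = 0 := by
      intro w hw
      obtain ⟨u, v, rfl⟩ := hS w hw
      by_cases huv : u = v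
      · subst huv
        have h0 : rigidityVec p u u = 0 := by
          funext x; unfold rigidityVec; split_ifs <;> simp
        simp [h0]
      · funext i
        rw [hΦapp, Fintype.sum_prod_type]
        have hf : ∀ y, y ≠ u → y ≠ v →
            (∑ j, rigidityVec p u v (y, j) * c i (y, j)) = 0 := by
          intro y h1 h2
          apply Finset.sum_eq_zero
          intro j _
          unfold rigidityVec
          simp [h1, h2]
        rw [sum_support_pair huv _ hf, Fin.sum_univ_two, Fin.sum_univ_two]
        unfold rigidityVec
        have huv' : ¬ v = u := fun h => huv h.symm
        fin_cases i <;> simp [hc, huv, huv'] <;> ring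
    have hsurj : Function.Surjective Φ := by
      intro t
      rcases hcoord with h0 | h1
      · have hd : p a 0 - p b 0 ≠ 0 := sub_ne_zero.mpr h0
        set z : ℝ := (t 2 + t 0 * p a 1 - t 1 * p a 0) / (p a 0 - p b 0) with hz
        refine ⟨Pi.single (a, 0) (t 0) + Pi.single (a, 1) (t 1 + z) + Pi.single (b, 1) (-z), ?_⟩
        funext i
        rw [map_add, map_add]
        simp only [Pi.add_apply, hsingle]
        fin_cases i <;> simp [hc, hz] <;> field_simp <;> ring
      · have hd : p b 1 - p a 1 ≠ 0 := sub_ne_zero.mpr (Ne.symm h1)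
        set z : ℝ := (t 2 + t 0 * p a 1 - t 1 * p a 0) / (p b 1 - p a 1) with hz
        refine ⟨Pi.single (a, 0) (t 0 + z) + Pi.single (a, 1) (t 1) + Pi.single (b, 0) (-z), ?_⟩
        funext i
        rw [map_add, map_add]
        simp only [Pi.add_apply, hsingle]
        fin_cases i <;> simp [hc, hz] <;> field_simp <;> ring
    have hrn := LinearMap.finrank_range_add_finrank_ker Φ
    rw [LinearMap.range_eq_top.2 hsurj, finrank_top] at hrn
    have h3 : finrank ℝ (Fin 3 → ℝ) = 3 := by simp
    have hdim : finrank ℝ (W × Fin 2 → ℝ) = 2 * Fintype.card W := by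
      simp [mul_comm]
    have hcard : 2 ≤ Fintype.card W := Fintype.one_lt_card_iff.2 ⟨a, b, hab'⟩
    have hle : Submodule.span ℝ S ≤ LinearMap.ker Φ :=
      Submodule.span_le.2 fun w hw => LinearMap.mem_ker.2 (hker w hw)
    have hmono := Submodule.finrank_mono hle
    omega

lemma rigidity_transfer {W V : Type*} [Fintype W] [DecidableEq W] [Fintype V] [DecidableEq V]
    (ι : W → V) (hι : Function.Injective ι) (p : V → Fin 2 → ℝ) :
    ∃ P : (W × Fin 2 → ℝ) →ₗ[ℝ] (V × Fin 2 → ℝ), Function.Injective P ∧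
      ∀ u v : W, P (rigidityVec (fun w => p (ι w)) u v) = rigidityVec p (ι u) (ι v) := by
  classical
  set P : (W × Fin 2 → ℝ) →ₗ[ℝ] (V × Fin 2 → ℝ) :=
    { toFun := fun w x => ∑ u, if ι u = x.1 then w (u, x.2) else 0
      map_add' := by
        intro w₁ w₂; funext x
        simp only [Pi.add_apply]
        rw [← Finset.sum_add_distrib]
        refine Finset.sum_congr rfl fun u _ => ?_
        split <;> simp
      map_smul' := by
        intro r w; funext x
        simp only [RingHom.id_apply, Pi.smul_apply, smul_eq_mul]
        rw [Finset.mul_sum]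
        refine Finset.sum_congr rfl fun u _ => ?_
        split <;> simp } with hP
  have hPapp : ∀ w x, P w x = ∑ u, if ι u = x.1 then w (u, x.2) else 0 := fun w x => rfl
  have heval : ∀ (w : W × Fin 2 → ℝ) (u : W) (j : Fin 2), P w (ι u, j) = w (u, j) := by
    intro w u j
    rw [hPapp, Finset.sum_eq_single u]
    · simp
    · intro u' _ hne
      exact if_neg fun h => hne (hι h)
    · intro h; exact absurd (Finset.mem_univ _) h
  refine ⟨P, ?_, ?_⟩
  · intro w₁ w₂ h
    funext x
    obtain ⟨u, j⟩ := x
    rw [← heval w₁ u j, ← heval w₂ u j, h]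
  · intro u v
    funext x
    obtain ⟨y, j⟩ := x
    by_cases hyu : y = ι u
    · subst hyu
      rw [heval]
      unfold rigidityVec
      simp
    · by_cases hyv : y = ι v
      · subst hyv
        rw [heval]
        have hvu : ¬ v = u := fun h => hyu (by rw [h])
        have hvu' : ¬ ι v = ι u := fun h => hvu (hι h)
        unfold rigidityVec
        simp [hvu, hvu']
      · have hrhs : rigidityVec p (ι u) (ι v) (y, j) = 0 := by
          unfold rigidityVec
          simp [hyu, hyv]
        rw [hrhs, hPapp]
        apply Finset.sum_eq_zero
        intro u' _
        by_cases h : ι u' = y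
        · rw [if_pos h]
          have h1 : ¬ u' = u := fun e => hyu (by rw [← h, e])
          have h2 : ¬ u' = v := fun e => hyv (by rw [← h, e])
          unfold rigidityVec
          simp [h1, h2]
        · rw [if_neg h]

open SimpleGraph

/-- Let `(G₁, G₂)` be a 2-separation of a rigid graph `G` with `G₂` not rigid, and let
`F` be a spanning isostatic subgraph of `G`. Then `|E(F) ∩ E(G₁)| = 2|V(G₁)| − 3`,
`|E(F) ∩ E(G₂)| = 2|V(G₂)| − 4`, and in particular `G₁` is rigid. -/
theorem two_separation_nonrigid_side_count {V : Type*} [Fintype V] [DecidableEq V]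
    (G : SimpleGraph V) (G₁ G₂ : G.Subgraph)
    (hunion : G₁ ⊔ G₂ = ⊤)
    (hedisj : Disjoint G₁.edgeSet G₂.edgeSet)
    (hc1 : 3 ≤ G₁.verts.ncard) (hc2 : 3 ≤ G₂.verts.ncard)
    (v₁ v₂ : V) (hv : v₁ ≠ v₂) (hsep : G₁.verts ∩ G₂.verts = {v₁, v₂})
    (hGrigid : GraphRigid G) (hG2 : ¬ GraphRigid G₂.coe)
    (F : G.Subgraph) (hFspan : F.verts = Set.univ)
    (hFrigid : GraphRigid F.coe)
    (hFiso : F.edgeSet.ncard = 2 * Fintype.card V - 3) :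
    (F.edgeSet ∩ G₁.edgeSet).ncard = 2 * G₁.verts.ncard - 3 ∧
      (F.edgeSet ∩ G₂.edgeSet).ncard = 2 * G₂.verts.ncard - 4 ∧
      GraphRigid G₁.coe := by
  classical
  -- vertex counts
  have hvertsU : G₁.verts ∪ G₂.verts = Set.univ := by
    have h := congrArg Subgraph.verts hunion
    rwa [Subgraph.verts_sup, Subgraph.verts_top] at h
  have hn : G₁.verts.ncard + G₂.verts.ncard = Fintype.card V + 2 := by
    have h := Set.ncard_union_add_ncard_inter G₁.verts G₂.verts (Set.toFinite _) (Set.toFinite _)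
    rw [hvertsU, hsep, Set.ncard_univ, Nat.card_eq_fintype_card, Set.ncard_pair hv] at h
    omega
  -- edge partition
  have hedgeU : G.edgeSet = G₁.edgeSet ∪ G₂.edgeSet := by
    have h := congrArg Subgraph.edgeSet hunion
    rw [Subgraph.edgeSet_sup, Subgraph.edgeSet_top] at h
    exact h.symm
  have hFsub : F.edgeSet ⊆ G₁.edgeSet ∪ G₂.edgeSet := hedgeU ▸ F.edgeSet_subset
  have hsplit : (F.edgeSet ∩ G₁.edgeSet) ∪ (F.edgeSet ∩ G₂.edgeSet) = F.edgeSet := by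
    rw [← Set.inter_union_distrib_left]
    exact Set.inter_eq_self_of_subset_left hFsub
  have hdisj2 : Disjoint (F.edgeSet ∩ G₁.edgeSet) (F.edgeSet ∩ G₂.edgeSet) :=
    hedisj.mono Set.inter_subset_right Set.inter_subset_right
  have hsum : (F.edgeSet ∩ G₁.edgeSet).ncard + (F.edgeSet ∩ G₂.edgeSet).ncard
      = 2 * Fintype.card V - 3 := by
    rw [← Set.ncard_union_eq hdisj2 (Set.toFinite _) (Set.toFinite _), hsplit, hFiso]
  -- realisation
  obtain ⟨phat, hphat⟩ := hFrigid
  have hmemF : ∀ x : V, x ∈ F.verts := fun x => hFspan ▸ Set.mem_univ x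
  set p : V → Fin 2 → ℝ := fun x => phat ⟨x, hmemF x⟩ with hpdef
  haveI : Fintype ↥F.verts := (Set.toFinite _).fintype
  obtain ⟨P, hPinj, hPmap⟩ :=
    rigidity_transfer (fun w : ↥F.verts => (w : V)) Subtype.val_injective p
  have hPmap' : ∀ u v : ↥F.verts, P (rigidityVec phat u v) = rigidityVec p ↑u ↑v := by
    intro u v
    have hpc : (fun w : ↥F.verts => p ↑w) = phat := funext fun w => congrArg phat (Subtype.ext rfl)
    rw [← hpc]
    exact hPmap u v
  -- rows
  set row : Sym2 V → (V × Fin 2 → ℝ) :=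
    Sym2.lift ⟨fun u v => rigidityVec p u v, fun u v => rigidityVec_symm p u v⟩ with hrowdef
  have hrow : ∀ u v : V, row s(u, v) = rigidityVec p u v := fun u v => rfl
  have himageF : row '' F.edgeSet
      = {w : V × Fin 2 → ℝ | ∃ u v : V, F.Adj u v ∧ w = rigidityVec p u v} := by
    ext w
    constructor
    · rintro ⟨e, he, rfl⟩
      induction e using Sym2.ind with
      | _ u v => exact ⟨u, v, Subgraph.mem_edgeSet.1 he, (hrow u v).symm⟩
    · rintro ⟨u, v, huv, rfl⟩
      exact ⟨s(u, v), Subgraph.mem_edgeSet.2 huv, hrow u v⟩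
  have hPimage : P '' {w | ∃ u v : ↥F.verts, F.coe.Adj u v ∧ w = rigidityVec phat u v}
      = {w : V × Fin 2 → ℝ | ∃ u v : V, F.Adj u v ∧ w = rigidityVec p u v} := by
    ext w
    constructor
    · rintro ⟨w', ⟨u, v, huv, rfl⟩, rfl⟩
      exact ⟨↑u, ↑v, huv, hPmap' u v⟩
    · rintro ⟨u, v, huv, rfl⟩
      exact ⟨rigidityVec phat ⟨u, F.edge_vert huv⟩ ⟨v, F.edge_vert huv.symm⟩,
        ⟨⟨u, F.edge_vert huv⟩, ⟨v, F.edge_vert huv.symm⟩, huv, rfl⟩, hPmap' _ _⟩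
  have hNF : Nat.card ↥F.verts = Fintype.card V := by
    rw [Nat.card_coe_set_eq, hFspan, Set.ncard_univ, Nat.card_eq_fintype_card]
  have hrankFV : Module.finrank ℝ (Submodule.span ℝ (row '' F.edgeSet))
      = 2 * Fintype.card V - 3 := by
    rw [himageF, ← hPimage, Submodule.span_image,
      ← LinearEquiv.finrank_eq (Submodule.equivMapOfInjective P hPinj _), hphat, hNF]
  -- linear independence of the rows of F
  haveI : Fintype ↥F.edgeSet := (Set.toFinite _).fintype
  have hcardF : Fintype.card ↥F.edgeSet = 2 * Fintype.card V - 3 := by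
    rw [← Nat.card_eq_fintype_card, Nat.card_coe_set_eq, hFiso]
  have hli : LinearIndependent ℝ (fun e : ↥F.edgeSet => row ↑e) := by
    apply linearIndependent_iff_card_eq_finrank_span.2
    rw [hcardF, Set.finrank, ← Set.image_eq_range, hrankFV]
  have hsubrank : ∀ T : Set (Sym2 V), T ⊆ F.edgeSet →
      Module.finrank ℝ (Submodule.span ℝ (row '' T)) = T.ncard := by
    intro T hT
    haveI : Fintype ↥T := (Set.toFinite _).fintype
    have hli' : LinearIndependent ℝ (fun e : ↥T => row ↑e) :=
      hli.comp (Set.inclusion hT) (Set.inclusion_injective hT)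
    have h := linearIndependent_iff_card_eq_finrank_span.1 hli'
    rw [Set.finrank, ← Set.image_eq_range] at h
    rw [← h, ← Nat.card_eq_fintype_card, Nat.card_coe_set_eq]
  -- transfer for G₁ and G₂
  haveI : Fintype ↥G₁.verts := (Set.toFinite _).fintype
  haveI : Fintype ↥G₂.verts := (Set.toFinite _).fintype
  obtain ⟨P₁, hP₁inj, hP₁map⟩ :=
    rigidity_transfer (fun w : ↥G₁.verts => (w : V)) Subtype.val_injective p
  obtain ⟨P₂, hP₂inj, hP₂map⟩ :=
    rigidity_transfer (fun w : ↥G₂.verts => (w : V)) Subtype.val_injective p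
  have hn₁ : Fintype.card ↥G₁.verts = G₁.verts.ncard := by
    rw [← Nat.card_eq_fintype_card, Nat.card_coe_set_eq]
  have hn₂ : Fintype.card ↥G₂.verts = G₂.verts.ncard := by
    rw [← Nat.card_eq_fintype_card, Nat.card_coe_set_eq]
  -- the set of rows for G₁ resp. G₂ (in their own spaces)
  have himg1 : row '' (F.edgeSet ∩ G₁.edgeSet) ⊆
      P₁ '' {w | ∃ u v : ↥G₁.verts, G₁.coe.Adj u v ∧
        w = rigidityVec (fun w : ↥G₁.verts => p ↑w) u v} := by
    intro w hw
    obtain ⟨e, he, rfl⟩ := hw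
    induction e using Sym2.ind with
    | _ u v =>
      have hadj : G₁.Adj u v := Subgraph.mem_edgeSet.1 he.2
      refine ⟨rigidityVec (fun w : ↥G₁.verts => p ↑w) ⟨u, G₁.edge_vert hadj⟩
        ⟨v, G₁.edge_vert hadj.symm⟩,
        ⟨⟨u, G₁.edge_vert hadj⟩, ⟨v, G₁.edge_vert hadj.symm⟩, hadj, rfl⟩, ?_⟩
      rw [hrow]
      exact hP₁map _ _
  have himg2 : row '' (F.edgeSet ∩ G₂.edgeSet) ⊆
      P₂ '' {w | ∃ u v : ↥G₂.verts, G₂.coe.Adj u v ∧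
        w = rigidityVec (fun w : ↥G₂.verts => p ↑w) u v} := by
    intro w hw
    obtain ⟨e, he, rfl⟩ := hw
    induction e using Sym2.ind with
    | _ u v =>
      have hadj : G₂.Adj u v := Subgraph.mem_edgeSet.1 he.2
      refine ⟨rigidityVec (fun w : ↥G₂.verts => p ↑w) ⟨u, G₂.edge_vert hadj⟩
        ⟨v, G₂.edge_vert hadj.symm⟩,
        ⟨⟨u, G₂.edge_vert hadj⟩, ⟨v, G₂.edge_vert hadj.symm⟩, hadj, rfl⟩, ?_⟩
      rw [hrow]
      exact hP₂map _ _
  have hPS₁ : Module.finrank ℝ (Submodule.span ℝ (P₁ '' {w | ∃ u v : ↥G₁.verts,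
        G₁.coe.Adj u v ∧ w = rigidityVec (fun w : ↥G₁.verts => p ↑w) u v}))
      = Module.finrank ℝ (Submodule.span ℝ {w | ∃ u v : ↥G₁.verts,
        G₁.coe.Adj u v ∧ w = rigidityVec (fun w : ↥G₁.verts => p ↑w) u v}) := by
    rw [Submodule.span_image]
    exact (LinearEquiv.finrank_eq (Submodule.equivMapOfInjective P₁ hP₁inj _)).symm
  have hPS₂ : Module.finrank ℝ (Submodule.span ℝ (P₂ '' {w | ∃ u v : ↥G₂.verts,
        G₂.coe.Adj u v ∧ w = rigidityVec (fun w : ↥G₂.verts => p ↑w) u v}))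
      = Module.finrank ℝ (Submodule.span ℝ {w | ∃ u v : ↥G₂.verts,
        G₂.coe.Adj u v ∧ w = rigidityVec (fun w : ↥G₂.verts => p ↑w) u v}) := by
    rw [Submodule.span_image]
    exact (LinearEquiv.finrank_eq (Submodule.equivMapOfInjective P₂ hP₂inj _)).symm
  have hS₁le : Module.finrank ℝ (Submodule.span ℝ {w | ∃ u v : ↥G₁.verts,
        G₁.coe.Adj u v ∧ w = rigidityVec (fun w : ↥G₁.verts => p ↑w) u v})
      ≤ 2 * G₁.verts.ncard - 3 := by
    rw [← hn₁]
    exact rank_rigidity_le _ _ (fun w hw => by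
      obtain ⟨u, v, _, h⟩ := hw; exact ⟨u, v, h⟩)
  have hS₂le : Module.finrank ℝ (Submodule.span ℝ {w | ∃ u v : ↥G₂.verts,
        G₂.coe.Adj u v ∧ w = rigidityVec (fun w : ↥G₂.verts => p ↑w) u v})
      ≤ 2 * G₂.verts.ncard - 3 := by
    rw [← hn₂]
    exact rank_rigidity_le _ _ (fun w hw => by
      obtain ⟨u, v, _, h⟩ := hw; exact ⟨u, v, h⟩)
  have hS₂ne : Module.finrank ℝ (Submodule.span ℝ {w | ∃ u v : ↥G₂.verts,
        G₂.coe.Adj u v ∧ w = rigidityVec (fun w : ↥G₂.verts => p ↑w) u v})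
      ≠ 2 * G₂.verts.ncard - 3 := by
    intro h
    exact hG2 ⟨fun w : ↥G₂.verts => p ↑w, by rw [h, Nat.card_coe_set_eq]⟩
  -- the two inequalities
  have he1le : (F.edgeSet ∩ G₁.edgeSet).ncard ≤ 2 * G₁.verts.ncard - 3 := by
    rw [← hsubrank _ Set.inter_subset_left]
    calc Module.finrank ℝ (Submodule.span ℝ (row '' (F.edgeSet ∩ G₁.edgeSet)))
        ≤ Module.finrank ℝ (Submodule.span ℝ (P₁ '' {w | ∃ u v : ↥G₁.verts,
            G₁.coe.Adj u v ∧ w = rigidityVec (fun w : ↥G₁.verts => p ↑w) u v})) :=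
          Submodule.finrank_mono (Submodule.span_mono himg1)
      _ ≤ 2 * G₁.verts.ncard - 3 := by rw [hPS₁]; exact hS₁le
  have he2le : (F.edgeSet ∩ G₂.edgeSet).ncard ≤ 2 * G₂.verts.ncard - 4 := by
    have h := Submodule.finrank_mono (R := ℝ) (Submodule.span_mono himg2)
    rw [hsubrank _ Set.inter_subset_left, hPS₂] at h
    have h34 : Module.finrank ℝ (Submodule.span ℝ {w | ∃ u v : ↥G₂.verts,
        G₂.coe.Adj u v ∧ w = rigidityVec (fun w : ↥G₂.verts => p ↑w) u v})
        ≤ 2 * G₂.verts.ncard - 4 := by omega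
    omega
  have he1 : (F.edgeSet ∩ G₁.edgeSet).ncard = 2 * G₁.verts.ncard - 3 := by omega
  have he2 : (F.edgeSet ∩ G₂.edgeSet).ncard = 2 * G₂.verts.ncard - 4 := by omega
  refine ⟨he1, he2, ⟨fun w : ↥G₁.verts => p ↑w, ?_⟩⟩
  have hge : 2 * G₁.verts.ncard - 3 ≤ Module.finrank ℝ (Submodule.span ℝ
      {w | ∃ u v : ↥G₁.verts, G₁.coe.Adj u v ∧
        w = rigidityVec (fun w : ↥G₁.verts => p ↑w) u v}) := by
    rw [← hPS₁, ← he1, ← hsubrank _ Set.inter_subset_left]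
    exact Submodule.finrank_mono (Submodule.span_mono himg1)
  rw [Nat.card_coe_set_eq]
  omega
end
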